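/- Let (Ω, ℱ, P) be a probability space and σ : Ω → Ω a measurable measure-preserving map. Let n₁ : Ω → ℕ be measurable and suppose there are constants C, τ > 0 and d ∈ (0,1] such that P{ω : n₁(ω) ≥ m} ≤ C·e^{−τ·m^{d}} for all m ≥ 1. Fix c ∈ (0,1) and define n₂(ω) to be the least integer n ≥ 1 such that for every k > n and every j with k ≤ j ≤ 2k−1 one has n₁(σ^{j}ω) < k^{1−c} (and n₂(ω) = ∞ if no such n exists). Then n₂ is finite P-almost surely, and there exist constants C', τ' > 0 such that P{ω : n₂(ω) > n} ≤ C'·e^{−τ'·n^{(1−c)d}} for all n ≥ 1. -/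

import Mathlib

open MeasureTheory Filter
open scoped Topology ENNReal NNReal

theorem random_threshold_stretched_exponential_tail {Ω : Type*} [MeasurableSpace Ω]
    (μ : Measure Ω) [IsProbabilityMeasure μ]
    (σ : Ω → Ω) (hσ : MeasurePreserving σ μ μ)
    (n₁ : Ω → ℕ) (hn₁ : Measurable n₁)
    (C τ d : ℝ) (hC : 0 < C) (hτ : 0 < τ) (hd0 : 0 < d) (hd1 : d ≤ 1)
    (htail : ∀ m : ℕ, 1 ≤ m →
      μ {ω | m ≤ n₁ ω} ≤ ENNReal.ofReal (C * Real.exp (-τ * (m : ℝ) ^ d)))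
    (c : ℝ) (hc0 : 0 < c) (hc1 : c < 1) :
    (∀ᵐ ω ∂μ, ∃ n : ℕ, 1 ≤ n ∧
      ∀ k > n, ∀ j : ℕ, k ≤ j → j ≤ 2 * k - 1 →
        ((n₁ (σ^[j] ω) : ℝ) < (k : ℝ) ^ (1 - c))) ∧
    ∃ C' > (0:ℝ), ∃ τ' > (0:ℝ), ∀ n : ℕ, 1 ≤ n →
      μ {ω | ¬ ∀ k > n, ∀ j : ℕ, k ≤ j → j ≤ 2 * k - 1 →
          ((n₁ (σ^[j] ω) : ℝ) < (k : ℝ) ^ (1 - c))}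
        ≤ ENNReal.ofReal (C' * Real.exp (-τ' * (n : ℝ) ^ ((1 - c) * d))) := by
  set β : ℝ := (1 - c) * d with hβdef
  have hβ : 0 < β := mul_pos (by linarith) hd0
  -- single event bound
  have hsingle : ∀ k : ℕ, 1 ≤ k → ∀ j : ℕ,
      μ {ω | (k : ℝ) ^ (1 - c) ≤ (n₁ (σ^[j] ω) : ℝ)}
        ≤ ENNReal.ofReal (C * Real.exp (-τ * (k : ℝ) ^ β)) := by
    intro k hk j
    have hkpos : (0:ℝ) < (k:ℝ) := by exact_mod_cast hk
    have hrp : (0:ℝ) < (k:ℝ) ^ (1 - c) := Real.rpow_pos_of_pos hkpos _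
    set m : ℕ := ⌈(k:ℝ) ^ (1 - c)⌉₊ with hm
    have hm1 : 1 ≤ m := Nat.ceil_pos.mpr hrp
    have hset : {ω | (k : ℝ) ^ (1 - c) ≤ (n₁ ω : ℝ)} = n₁ ⁻¹' Set.Ici m := by
      ext ω
      simp only [Set.mem_setOf_eq, Set.mem_preimage, Set.mem_Ici, hm, Nat.ceil_le]
    have hmeas : MeasurableSet {ω | (k : ℝ) ^ (1 - c) ≤ (n₁ ω : ℝ)} := by
      rw [hset]; exact hn₁ measurableSet_Ici
    have hpre : {ω | (k : ℝ) ^ (1 - c) ≤ (n₁ (σ^[j] ω) : ℝ)}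
        = σ^[j] ⁻¹' {ω | (k : ℝ) ^ (1 - c) ≤ (n₁ ω : ℝ)} := rfl
    rw [hpre, (hσ.iterate j).measure_preimage hmeas.nullMeasurableSet, hset]
    have h1 : μ (n₁ ⁻¹' Set.Ici m) ≤ ENNReal.ofReal (C * Real.exp (-τ * (m : ℝ) ^ d)) := by
      have := htail m hm1
      simpa [Set.preimage, Set.mem_Ici] using this
    refine h1.trans (ENNReal.ofReal_le_ofReal ?_)
    have hmk : (k:ℝ) ^ β ≤ (m:ℝ) ^ d := by
      have h2 : (k:ℝ) ^ (1 - c) ≤ (m:ℝ) := Nat.le_ceil _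
      calc (k:ℝ) ^ β = ((k:ℝ) ^ (1 - c)) ^ d := Real.rpow_mul hkpos.le _ _
        _ ≤ (m:ℝ) ^ d := Real.rpow_le_rpow hrp.le h2 hd0.le
    have := Real.exp_le_exp.mpr (by nlinarith : -τ * (m:ℝ) ^ d ≤ -τ * (k:ℝ) ^ β)
    nlinarith [Real.exp_pos (-τ * (m:ℝ) ^ d)]
  -- summability of the dominating series
  have hsum : Summable (fun k : ℕ => (k : ℝ) * (C * Real.exp (-(τ/2) * (k:ℝ) ^ β))) := by
    have hg : Summable (fun k : ℕ => (k : ℝ) ^ (-2 : ℝ)) :=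
      Real.summable_nat_rpow.mpr (by norm_num)
    refine summable_of_isBigO_nat hg ?_
    rw [Asymptotics.isBigO_iff]
    refine ⟨1, ?_⟩
    have h0 : Tendsto (fun k : ℕ => (k : ℝ) ^ (3 : ℝ) * (C * Real.exp (-(τ/2) * (k:ℝ) ^ β)))
        atTop (𝓝 0) := by
      have hb : (0:ℝ) < τ/2 := by positivity
      have ht1 : Tendsto (fun y : ℝ => C * (y ^ (3/β) * Real.exp (-(τ/2) * y))) atTop (𝓝 0) := by
        have := (tendsto_rpow_mul_exp_neg_mul_atTop_nhds_zero (3/β) (τ/2) hb).const_mul C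
        simpa using this
      have ht2 : Tendsto (fun k : ℕ => (k:ℝ) ^ β) atTop atTop :=
        (_root_.tendsto_rpow_atTop hβ).comp tendsto_natCast_atTop_atTop
      have := ht1.comp ht2
      refine this.congr' ?_
      filter_upwards [eventually_ge_atTop 1] with k hk
      have hkpos : (0:ℝ) < (k:ℝ) := by exact_mod_cast hk
      have : ((k:ℝ) ^ β) ^ (3/β) = (k:ℝ) ^ (3:ℝ) := by
        rw [← Real.rpow_mul hkpos.le]
        congr 1
        field_simp
      simp only [Function.comp]
      rw [this]; ring
    have h1 : ∀ᶠ k : ℕ in atTop,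
        (k : ℝ) ^ (3 : ℝ) * (C * Real.exp (-(τ/2) * (k:ℝ) ^ β)) < 1 :=
      h0.eventually_lt_const one_pos
    filter_upwards [h1, eventually_ge_atTop 1] with k hk1 hk
    have hkpos : (0:ℝ) < (k:ℝ) := by exact_mod_cast hk
    have hterm : (0:ℝ) ≤ (k : ℝ) * (C * Real.exp (-(τ/2) * (k:ℝ) ^ β)) := by positivity
    have hsplit : (k : ℝ) * (C * Real.exp (-(τ/2) * (k:ℝ) ^ β))
        = ((k : ℝ) ^ (3 : ℝ) * (C * Real.exp (-(τ/2) * (k:ℝ) ^ β))) * (k:ℝ) ^ (-2 : ℝ) := by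
      have : (k:ℝ) ^ (3:ℝ) * (k:ℝ) ^ (-2:ℝ) = (k:ℝ) := by
        rw [← Real.rpow_add hkpos]
        norm_num
      nlinarith [this]
    rw [Real.norm_eq_abs, Real.norm_eq_abs, abs_of_nonneg hterm,
      abs_of_nonneg (Real.rpow_nonneg hkpos.le (-2:ℝ)), hsplit, one_mul]
    have h3 : (0:ℝ) ≤ (k:ℝ) ^ (-2:ℝ) := Real.rpow_nonneg hkpos.le _
    exact mul_le_of_le_one_left h3 hk1.le
  set R : ℝ := ∑' k : ℕ, (k : ℝ) * (C * Real.exp (-(τ/2) * (k:ℝ) ^ β)) with hR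
  have hRnn : 0 ≤ R := tsum_nonneg (fun k => by positivity)
  have hwsum : (∑' k : ℕ, ((k : ℝ≥0∞) * ENNReal.ofReal (C * Real.exp (-(τ/2) * (k:ℝ) ^ β))))
      = ENNReal.ofReal R := by
    rw [hR, ENNReal.ofReal_tsum_of_nonneg (fun k => by positivity) hsum]
    congr 1
    ext k
    rw [ENNReal.ofReal_mul (by positivity : (0:ℝ) ≤ (k:ℝ)), ENNReal.ofReal_natCast]
  set C' : ℝ := max R 1 with hC'
  -- the key tail bound
  have key : ∀ n : ℕ, 1 ≤ n →
      μ {ω | ¬ ∀ k > n, ∀ j : ℕ, k ≤ j → j ≤ 2 * k - 1 →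
          ((n₁ (σ^[j] ω) : ℝ) < (k : ℝ) ^ (1 - c))}
        ≤ ENNReal.ofReal (C' * Real.exp (-(τ/2) * (n : ℝ) ^ β)) := by
    intro n hn
    set S : ℕ × ℕ → Set Ω := fun p =>
      if n < p.1 ∧ p.1 ≤ p.2 ∧ p.2 ≤ 2 * p.1 - 1
      then {ω | (p.1 : ℝ) ^ (1 - c) ≤ (n₁ (σ^[p.2] ω) : ℝ)} else ∅ with hS
    have hsub : {ω | ¬ ∀ k > n, ∀ j : ℕ, k ≤ j → j ≤ 2 * k - 1 →
        ((n₁ (σ^[j] ω) : ℝ) < (k : ℝ) ^ (1 - c))} ⊆ ⋃ p : ℕ × ℕ, S p := by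
      intro ω hω
      simp only [Set.mem_setOf_eq] at hω
      push_neg at hω
      obtain ⟨k, hk, j, hkj, hj2k, hge⟩ := hω
      refine Set.mem_iUnion.mpr ⟨(k, j), ?_⟩
      simp only [hS, hk, hkj, hj2k, and_self, if_true]
      exact hge
    refine (measure_mono hsub).trans ?_
    refine (measure_iUnion_le _).trans ?_
    have hprod : (∑' i : ℕ × ℕ, μ (S i)) = ∑' k : ℕ, ∑' j : ℕ, μ (S (k, j)) :=
      ENNReal.tsum_prod (f := fun k j => μ (S (k, j)))
    rw [hprod]
    have hinner : ∀ k : ℕ, (∑' j : ℕ, μ (S (k, j)))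
        ≤ ENNReal.ofReal (Real.exp (-(τ/2) * (n:ℝ) ^ β)) *
          ((k : ℝ≥0∞) * ENNReal.ofReal (C * Real.exp (-(τ/2) * (k:ℝ) ^ β))) := by
      intro k
      by_cases hk : n < k
      · have hk1 : 1 ≤ k := le_trans hn hk.le
        have hzero : ∀ j ∉ Finset.Icc k (2 * k - 1), μ (S (k, j)) = 0 := by
          intro j hj
          simp only [Finset.mem_Icc, not_and_or, not_le] at hj
          have : ¬ (n < k ∧ k ≤ j ∧ j ≤ 2 * k - 1) := by
            rcases hj with h | h
            · exact fun hh => absurd hh.2.1 (not_le.mpr h)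
            · exact fun hh => absurd hh.2.2 (not_le.mpr h)
          simp [hS, this]
        rw [tsum_eq_sum hzero]
        have hbound : ∀ j ∈ Finset.Icc k (2 * k - 1),
            μ (S (k, j)) ≤ ENNReal.ofReal (C * Real.exp (-τ * (k:ℝ) ^ β)) := by
          intro j hj
          by_cases hcond : n < k ∧ k ≤ j ∧ j ≤ 2 * k - 1
          · simp only [hS, hcond, if_true]
            exact hsingle k hk1 j
          · simp [hS, hcond]
        have hcard : (Finset.Icc k (2 * k - 1)).card = k := by
          rw [Nat.card_Icc]; omega
        calc (∑ j ∈ Finset.Icc k (2 * k - 1), μ (S (k, j)))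
            ≤ (Finset.Icc k (2 * k - 1)).card • ENNReal.ofReal (C * Real.exp (-τ * (k:ℝ) ^ β)) :=
              Finset.sum_le_card_nsmul _ _ _ hbound
          _ = (k : ℝ≥0∞) * ENNReal.ofReal (C * Real.exp (-τ * (k:ℝ) ^ β)) := by
              rw [hcard, nsmul_eq_mul]
          _ ≤ ENNReal.ofReal (Real.exp (-(τ/2) * (n:ℝ) ^ β)) *
              ((k : ℝ≥0∞) * ENNReal.ofReal (C * Real.exp (-(τ/2) * (k:ℝ) ^ β))) := by
              rw [← mul_assoc, mul_comm (ENNReal.ofReal (Real.exp (-(τ/2) * (n:ℝ) ^ β))) _,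
                mul_assoc]
              refine mul_le_mul_right ?_ _
              rw [← ENNReal.ofReal_mul (by positivity)]
              refine ENNReal.ofReal_le_ofReal ?_
              have hnk : (n:ℝ) ^ β ≤ (k:ℝ) ^ β := by
                refine Real.rpow_le_rpow (by positivity) ?_ hβ.le
                exact_mod_cast hk.le
              have hexp : Real.exp (-(τ/2) * (k:ℝ) ^ β) ≤ Real.exp (-(τ/2) * (n:ℝ) ^ β) :=
                Real.exp_le_exp.mpr (by nlinarith)
              have hsplit : Real.exp (-τ * (k:ℝ) ^ β)
                  = Real.exp (-(τ/2) * (k:ℝ) ^ β) * Real.exp (-(τ/2) * (k:ℝ) ^ β) := by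
                rw [← Real.exp_add]; ring_nf
              rw [hsplit]
              have := mul_le_mul_of_nonneg_left hexp
                (by positivity : (0:ℝ) ≤ C * Real.exp (-(τ/2) * (k:ℝ) ^ β))
              nlinarith [this]
      · have : ∀ j : ℕ, μ (S (k, j)) = 0 := by
          intro j
          have : ¬ (n < k ∧ k ≤ j ∧ j ≤ 2 * k - 1) := fun hh => hk hh.1
          simp [hS, this]
        simp [this]
    calc (∑' k : ℕ, ∑' j : ℕ, μ (S (k, j)))
        ≤ ∑' k : ℕ, ENNReal.ofReal (Real.exp (-(τ/2) * (n:ℝ) ^ β)) *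
          ((k : ℝ≥0∞) * ENNReal.ofReal (C * Real.exp (-(τ/2) * (k:ℝ) ^ β))) :=
          ENNReal.tsum_le_tsum hinner
      _ = ENNReal.ofReal (Real.exp (-(τ/2) * (n:ℝ) ^ β)) * ENNReal.ofReal R := by
          rw [ENNReal.tsum_mul_left, hwsum]
      _ ≤ ENNReal.ofReal (C' * Real.exp (-(τ/2) * (n : ℝ) ^ β)) := by
          rw [← ENNReal.ofReal_mul (Real.exp_nonneg _)]
          refine ENNReal.ofReal_le_ofReal ?_
          have : R ≤ C' := le_max_left _ _
          nlinarith [Real.exp_pos (-(τ/2) * (n:ℝ) ^ β)]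
  constructor
  · -- a.e. finiteness
    rw [ae_iff]
    push_neg
    have hT : ∀ n : ℕ, 1 ≤ n → {ω | ¬ ∃ n : ℕ, 1 ≤ n ∧
        ∀ k > n, ∀ j : ℕ, k ≤ j → j ≤ 2 * k - 1 →
          ((n₁ (σ^[j] ω) : ℝ) < (k : ℝ) ^ (1 - c))} ⊆
        {ω | ¬ ∀ k > n, ∀ j : ℕ, k ≤ j → j ≤ 2 * k - 1 →
          ((n₁ (σ^[j] ω) : ℝ) < (k : ℝ) ^ (1 - c))} := by
      intro n hn ω hω
      simp only [Set.mem_setOf_eq] at hω ⊢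
      exact fun h => hω ⟨n, hn, h⟩
    have hle : ∀ n : ℕ, 1 ≤ n → μ {ω | ¬ ∃ n : ℕ, 1 ≤ n ∧
        ∀ k > n, ∀ j : ℕ, k ≤ j → j ≤ 2 * k - 1 →
          ((n₁ (σ^[j] ω) : ℝ) < (k : ℝ) ^ (1 - c))}
        ≤ ENNReal.ofReal (C' * Real.exp (-(τ/2) * (n : ℝ) ^ β)) :=
      fun n hn => (measure_mono (hT n hn)).trans (key n hn)
    have htend : Tendsto (fun n : ℕ => ENNReal.ofReal (C' * Real.exp (-(τ/2) * (n : ℝ) ^ β)))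
        atTop (𝓝 0) := by
      have h1 : Tendsto (fun n : ℕ => -(τ/2) * (n:ℝ) ^ β) atTop atBot := by
        refine Tendsto.const_mul_atTop_of_neg (by linarith : -(τ/2) < 0) ?_
        exact (_root_.tendsto_rpow_atTop hβ).comp tendsto_natCast_atTop_atTop
      have h2 : Tendsto (fun n : ℕ => C' * Real.exp (-(τ/2) * (n:ℝ) ^ β)) atTop (𝓝 0) := by
        have := (Real.tendsto_exp_atBot.comp h1).const_mul C'
        simpa using this
      have := (ENNReal.continuous_ofReal.tendsto 0).comp h2
      simpa [Function.comp_def] using this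
    have : μ {ω | ¬ ∃ n : ℕ, 1 ≤ n ∧
        ∀ k > n, ∀ j : ℕ, k ≤ j → j ≤ 2 * k - 1 →
          ((n₁ (σ^[j] ω) : ℝ) < (k : ℝ) ^ (1 - c))} ≤ 0 := by
      refine ge_of_tendsto htend ?_
      filter_upwards [eventually_ge_atTop 1] with n hn
      exact hle n hn
    simpa using le_antisymm this zero_le
  · refine ⟨C', lt_of_lt_of_le one_pos (le_max_right _ _), τ/2, by positivity, ?_⟩
    exact key
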